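/- Let n ≥ 1, let μ₁, …, μₙ be real numbers, and let h be a real number with (n−2)·π/2 < h < n·π/2. Then the set { λ' ∈ ℝⁿ : ∑_{i=1}^n arctan(λ'ᵢ) = h and λ'ᵢ ≥ μᵢ for all i } is a bounded subset of ℝⁿ if and only if for every j ∈ {1,…,n} one has ∑_{l ≠ j} arctan(μ_l) > h − π/2. -/

import Mathlib

open Real Finset

private lemma tan_mono_aux {a b : ℝ} (ha : -(π/2) < a) (hb : b < π/2) (hab : a ≤ b) :
    Real.tan a ≤ Real.tan b := by
  rcases hab.eq_or_lt with rfl | hlt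
  · exact le_refl _
  · exact (Real.strictMonoOn_tan ⟨ha, hab.trans_lt hb⟩ ⟨ha.trans hlt, hb⟩ hlt).le

private lemma coord_le_norm {n : ℕ} (x : EuclideanSpace ℝ (Fin n)) (j : Fin n) :
    |x j| ≤ ‖x‖ := by
  rw [EuclideanSpace.norm_eq, ← Real.sqrt_sq_eq_abs]
  apply Real.sqrt_le_sqrt
  have : (x j) ^ 2 = ‖x j‖ ^ 2 := by rw [Real.norm_eq_abs, sq_abs]
  rw [this]
  exact Finset.single_le_sum (f := fun i => ‖x i‖ ^ 2) (fun i _ => by positivity)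
    (Finset.mem_univ j)

/-- Collins–Jacob–Yau's pointwise characterization of a C-subsolution (Lemma 2.4):
the set `{ λ' : ∑ arctan λ'ᵢ = h, λ'ᵢ ≥ μᵢ }` is bounded iff
`∑_{l ≠ j} arctan μ_l > h - π/2` for every `j`. -/
theorem dHYM_C_subsolution_characterization
    (n : ℕ) (hn : 1 ≤ n) (μ : Fin n → ℝ) (h : ℝ)
    (h1 : ((n : ℝ) - 2) * π / 2 < h) (h2 : h < (n : ℝ) * π / 2) :
    Bornology.IsBounded {lam : EuclideanSpace ℝ (Fin n) |
        (∑ i, Real.arctan (lam i) = h) ∧ ∀ i, μ i ≤ lam i} ↔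
      ∀ j : Fin n, h - π / 2 < ∑ l ∈ Finset.univ.erase j, Real.arctan (μ l) := by
  constructor
  · -- bounded → subsolution inequality
    intro hB j
    by_contra hcon
    push_neg at hcon
    -- rule out n = 1
    have hn2 : 2 ≤ n := by
      by_contra hlt
      have hn1 : n = 1 := by omega
      subst hn1
      have hempty : (Finset.univ.erase j) = ∅ :=
        Finset.eq_empty_of_forall_notMem fun l hl =>
          (Finset.ne_of_mem_erase hl) (Subsingleton.elim l j)
      rw [hempty, Finset.sum_empty] at hcon
      have : (1 : ℝ) * π / 2 = π / 2 := by ring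
      rw [Nat.cast_one, this] at h2
      linarith
    obtain ⟨C, hC⟩ := isBounded_iff_forall_norm_le.1 hB
    have hjne : (Finset.univ.erase j).Nonempty := by
      rw [← Finset.card_pos, Finset.card_erase_of_mem (Finset.mem_univ j), Finset.card_univ,
        Fintype.card_fin]
      omega
    set δ : ℝ := max (h - ((n : ℝ) - 1) * π / 2) 0 with hδdef
    have hδ2 : δ < π / 2 := by
      apply max_lt _ pi_div_two_pos
      nlinarith [h2]
    have hδ0 : (0 : ℝ) ≤ δ := le_max_right _ _
    set t : ℝ := max (max (C + 1) (μ j)) (Real.tan δ + 1) with htdef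
    have htδ : δ < Real.arctan t := by
      have h1' : Real.tan δ < t := lt_of_lt_of_le (lt_add_one _) (le_max_right _ _)
      calc δ = Real.arctan (Real.tan δ) :=
            (Real.arctan_tan (by linarith [pi_div_two_pos]) hδ2).symm
        _ < Real.arctan t := Real.arctan_strictMono h1'
    set T : ℝ := h - Real.arctan t with hTdef
    have hTlt : T < ((n : ℝ) - 1) * π / 2 := by
      have : h - ((n : ℝ) - 1) * π / 2 ≤ δ := le_max_left _ _
      simp only [hTdef]
      linarith
    have hTgt : ∑ l ∈ Finset.univ.erase j, Real.arctan (μ l) < T := by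
      have := Real.arctan_lt_pi_div_two t
      simp only [hTdef]
      linarith
    set f : ℝ → ℝ := fun s => ∑ l ∈ Finset.univ.erase j, Real.arctan (max (μ l) s) with hfdef
    have hfmono : Monotone f := by
      intro s s' hss'
      exact Finset.sum_le_sum fun l _ =>
        Real.arctan_strictMono.monotone (max_le_max le_rfl hss')
    have hfcont : Continuous f := by
      apply continuous_finset_sum
      intro l _
      exact Real.continuous_arctan.comp (continuous_const.max continuous_id)
    -- lower point
    set slo : ℝ := (Finset.univ.erase j).inf' hjne μ with hslodef
    have hflo : f slo = ∑ l ∈ Finset.univ.erase j, Real.arctan (μ l) := by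
      apply Finset.sum_congr rfl
      intro l hl
      rw [max_eq_left (Finset.inf'_le μ hl)]
    -- upper point
    have hnpos : (0 : ℝ) < (n : ℝ) - 1 := by
      have : (2 : ℝ) ≤ (n : ℝ) := by exact_mod_cast hn2
      linarith
    set γ : ℝ := max (T / ((n : ℝ) - 1)) 0 with hγdef
    have hγ2 : γ < π / 2 := by
      apply max_lt _ pi_div_two_pos
      rw [div_lt_iff₀ hnpos]
      nlinarith [hTlt]
    have hγ0 : (0 : ℝ) ≤ γ := le_max_right _ _
    set shi : ℝ := Real.tan γ with hshidef
    have hfhi : T ≤ f shi := by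
      have hterm : ∀ l ∈ Finset.univ.erase j, γ ≤ Real.arctan (max (μ l) shi) := by
        intro l _
        calc γ = Real.arctan (Real.tan γ) :=
              (Real.arctan_tan (by linarith [pi_div_two_pos]) hγ2).symm
          _ ≤ Real.arctan (max (μ l) shi) :=
              Real.arctan_strictMono.monotone (le_max_right _ _)
      have hcard := Finset.card_nsmul_le_sum _ _ _ hterm
      rw [Finset.card_erase_of_mem (Finset.mem_univ j), Finset.card_univ, Fintype.card_fin,
        nsmul_eq_mul] at hcard
      have hcast : ((n - 1 : ℕ) : ℝ) = (n : ℝ) - 1 := by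
        push_cast [Nat.cast_sub hn]
        ring
      rw [hcast] at hcard
      have hTγ : T ≤ ((n : ℝ) - 1) * γ := by
        have hd : T / ((n : ℝ) - 1) ≤ γ := le_max_left _ _
        calc T = ((n : ℝ) - 1) * (T / ((n : ℝ) - 1)) := by field_simp
          _ ≤ ((n : ℝ) - 1) * γ := by exact mul_le_mul_of_nonneg_left hd hnpos.le
      exact hTγ.trans hcard
    have hlohi : slo ≤ shi := by
      by_contra hltc
      push_neg at hltc
      have := hfmono hltc.le
      rw [hflo] at this
      linarith
    obtain ⟨s, _, hfs⟩ := intermediate_value_Icc hlohi hfcont.continuousOn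
      ⟨by rw [hflo]; exact hTgt.le, hfhi⟩
    -- construct the unbounded point
    set lam : EuclideanSpace ℝ (Fin n) := WithLp.toLp 2 (fun i => if i = j then t else max (μ i) s) with hlamdef
    have hmem : lam ∈ {lam : EuclideanSpace ℝ (Fin n) |
        (∑ i, Real.arctan (lam i) = h) ∧ ∀ i, μ i ≤ lam i} := by
      constructor
      · rw [← Finset.add_sum_erase _ _ (Finset.mem_univ j)]
        have hlj : lam j = t := by simp [hlamdef]
        have hrest : ∑ l ∈ Finset.univ.erase j, Real.arctan (lam l) = f s := by
          apply Finset.sum_congr rfl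
          intro l hl
          have : lam l = max (μ l) s := by
            simp [hlamdef, Finset.ne_of_mem_erase hl]
          rw [this]
        rw [hlj, hrest, hfs]
        simp [hTdef]
      · intro i
        by_cases hij : i = j
        · subst hij
          have : lam i = t := by simp [hlamdef]
          rw [this]
          exact le_trans (le_max_right _ _) (le_max_left _ _)
        · have : lam i = max (μ i) s := by simp [hlamdef, hij]
          rw [this]
          exact le_max_left _ _
    have hnorm := hC lam hmem
    have habs := coord_le_norm lam j
    have hlj : lam j = t := by simp [hlamdef]
    have ht1 : C + 1 ≤ t := le_trans (le_max_left _ _) (le_max_left _ _)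
    rw [hlj] at habs
    have := le_abs_self t
    linarith
  · -- subsolution inequality → bounded
    intro hsub
    rw [isBounded_iff_forall_norm_le]
    set c : Fin n → ℝ := fun i => max (h - ∑ l ∈ Finset.univ.erase i, Real.arctan (μ l)) 0
      with hcdef
    set M : Fin n → ℝ := fun i => max |μ i| |Real.tan (c i)| with hMdef
    refine ⟨Real.sqrt (∑ i, (M i) ^ 2), ?_⟩
    rintro x ⟨hsum, hge⟩
    have hxle : ∀ i, x i ≤ Real.tan (c i) := by
      intro i
      have hsplit : Real.arctan (x i) = h - ∑ l ∈ Finset.univ.erase i, Real.arctan (x l) := by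
        rw [← hsum, ← Finset.add_sum_erase _ _ (Finset.mem_univ i)]
        ring
      have hmon : ∑ l ∈ Finset.univ.erase i, Real.arctan (μ l)
          ≤ ∑ l ∈ Finset.univ.erase i, Real.arctan (x l) :=
        Finset.sum_le_sum fun l _ => Real.arctan_strictMono.monotone (hge l)
      have hle2 : Real.arctan (x i) ≤ c i := by
        have : Real.arctan (x i) ≤ h - ∑ l ∈ Finset.univ.erase i, Real.arctan (μ l) := by
          rw [hsplit]; linarith
        exact this.trans (le_max_left _ _)
      have hci : c i < π / 2 := by
        apply max_lt _ pi_div_two_pos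
        linarith [hsub i]
      calc x i = Real.tan (Real.arctan (x i)) := (Real.tan_arctan _).symm
        _ ≤ Real.tan (c i) := tan_mono_aux (Real.neg_pi_div_two_lt_arctan _) hci hle2
    rw [EuclideanSpace.norm_eq]
    apply Real.sqrt_le_sqrt
    apply Finset.sum_le_sum
    intro i _
    have habs : |x i| ≤ M i := by
      apply abs_le.2
      constructor
      · have h1' : -(M i) ≤ -|μ i| := neg_le_neg (le_max_left _ _)
        have h2' : -|μ i| ≤ μ i := neg_abs_le _
        linarith [hge i]
      · exact (hxle i).trans ((le_abs_self _).trans (le_max_right _ _))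
    calc ‖x i‖ ^ 2 = |x i| ^ 2 := by rw [Real.norm_eq_abs]
      _ ≤ (M i) ^ 2 := by
          exact pow_le_pow_left₀ (abs_nonneg _) habs 2
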